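/- Let a_1, …, a_n (n ≥ 1) be nonzero elements of R, and for each i set â_i = ∏_{j ≠ i} a_j (the product of all the a_j with j ≠ i). Then gcd(â_1, â_2, …, â_n) · lcm(a_1, …, a_n) is associated (equal up to multiplication by a unit of R) to the product a_1 · a_2 ⋯ a_n. -/

import Mathlib

private lemma foldr_gcd_dvd {R : Type*} [CommMonoidWithZero R] [GCDMonoid R]
    (l : List R) : ∀ x ∈ l, l.foldr gcd 0 ∣ x := by
  induction l with
  | nil => simp
  | cons h t ih =>
    intro x hx
    rcases List.mem_cons.mp hx with rfl | hx
    · exact gcd_dvd_left _ _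
    · exact (gcd_dvd_right _ _).trans (ih x hx)

private lemma dvd_foldr_gcd {R : Type*} [CommMonoidWithZero R] [GCDMonoid R]
    (l : List R) (d : R) (h : ∀ x ∈ l, d ∣ x) : d ∣ l.foldr gcd 0 := by
  induction l with
  | nil => simp
  | cons x t ih =>
    exact dvd_gcd (h x (List.mem_cons_self))
      (ih fun y hy => h y (List.mem_cons_of_mem _ hy))

private lemma foldr_lcm_dvd {R : Type*} [CommMonoidWithZero R] [GCDMonoid R]
    (l : List R) (P : R) (h : ∀ x ∈ l, x ∣ P) : l.foldr lcm 1 ∣ P := by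
  induction l with
  | nil => simp
  | cons x t ih =>
    exact lcm_dvd (h x (List.mem_cons_self))
      (ih fun y hy => h y (List.mem_cons_of_mem _ hy))

private lemma dvd_foldr_lcm {R : Type*} [CommMonoidWithZero R] [GCDMonoid R]
    (l : List R) (x : R) (hx : x ∈ l) : x ∣ l.foldr lcm 1 := by
  induction l with
  | nil => simp at hx
  | cons y t ih =>
    rcases List.mem_cons.mp hx with rfl | hx
    · exact dvd_lcm_left _ _
    · exact (ih hx).trans (dvd_lcm_right _ _)

/-- Let `a 0, …, a (n-1)` (with `n ≥ 1`) be nonzero elements of a GCD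
domain `R`, and for each `i` let `â i = ∏_{j ≠ i} a j`. Then
`gcd(â_1, …, â_n) ⬝ lcm(a_1, …, a_n)` is associated to `a_1 ⋯ a_n`, where the `n`-ary
gcd and lcm are the iterated binary ones. -/
theorem gcd_hat_mul_lcm {R : Type*} [CommRing R] [IsDomain R] [GCDMonoid R]
    {n : ℕ} (hn : 1 ≤ n) (a : Fin n → R) (ha : ∀ i, a i ≠ 0) :
    Associated
      (((List.ofFn (fun i => ∏ j ∈ Finset.univ.erase i, a j)).foldr gcd 0) *
        ((List.ofFn a).foldr lcm 1))
      (∏ i, a i) := by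
  set hat : Fin n → R := fun i => ∏ j ∈ Finset.univ.erase i, a j with hhat_def
  set G : R := (List.ofFn hat).foldr gcd 0 with hG_def
  set L : R := (List.ofFn a).foldr lcm 1 with hL_def
  set P : R := ∏ i, a i with hP_def
  have hhat : ∀ i, hat i * a i = P := fun i =>
    Finset.prod_erase_mul _ _ (Finset.mem_univ i)
  have hhat0 : ∀ i, hat i ≠ 0 := fun i =>
    Finset.prod_ne_zero_iff.mpr fun j _ => ha j
  have hGdvd : ∀ i, G ∣ hat i := fun i =>
    foldr_gcd_dvd _ _ (List.mem_ofFn.mpr ⟨i, rfl⟩)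
  have haL : ∀ i, a i ∣ L := fun i =>
    dvd_foldr_lcm _ _ (List.mem_ofFn.mpr ⟨i, rfl⟩)
  have hLP : L ∣ P := by
    apply foldr_lcm_dvd
    intro x hx
    obtain ⟨i, rfl⟩ := List.mem_ofFn.mp hx
    exact Finset.dvd_prod_of_mem a (Finset.mem_univ i)
  obtain ⟨c, hc⟩ := hLP
  set i0 : Fin n := ⟨0, hn⟩
  have hG0 : G ≠ 0 := fun h => hhat0 i0 (by
    have := hGdvd i0; rw [h] at this; exact (zero_dvd_iff.mp this))
  -- c divides every hat i
  have hchat : ∀ i, c ∣ hat i := by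
    intro i
    obtain ⟨t, ht⟩ := haL i
    have : hat i * a i = a i * (t * c) := by
      rw [hhat i, hc, ht]; ring
    have h2 : a i * hat i = a i * (t * c) := by rw [mul_comm (a i)] ; exact this
    exact ⟨t, mul_left_cancel₀ (ha i) (h2.trans (by ring))⟩
  have hcG : c ∣ G := by
    apply dvd_foldr_gcd
    intro x hx
    obtain ⟨i, rfl⟩ := List.mem_ofFn.mp hx
    exact hchat i
  have h1 : P ∣ G * L := by
    rw [hc, mul_comm G L]
    exact mul_dvd_mul dvd_rfl hcG
  -- G * L divides P
  obtain ⟨e, he⟩ : G ∣ P := (hGdvd i0).trans ⟨a i0, (hhat i0).symm⟩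
  have hae : ∀ i, a i ∣ e := by
    intro i
    obtain ⟨s, hs⟩ := hGdvd i
    have : G * e = G * (s * a i) := by rw [← he, ← hhat i, hs]; ring
    exact ⟨s, by rw [mul_left_cancel₀ hG0 this]; ring⟩
  have hLe : L ∣ e := by
    apply foldr_lcm_dvd
    intro x hx
    obtain ⟨i, rfl⟩ := List.mem_ofFn.mp hx
    exact hae i
  have h2 : G * L ∣ P := by
    rw [he]
    exact mul_dvd_mul dvd_rfl hLe
  exact associated_of_dvd_dvd h2 h1
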